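/- With the sparse attention pattern I_i = {j ≤ i : i - kB < j} ∪ {j ≤ i : (j-1) mod B ≥ B - c} and fixed constants k, c ≥ 1, choosing B = ⌈√L⌉ yields Σ_{i=1}^{L} |I_i| = O(L√L). -/

import Mathlib

open Finset

theorem sparse_attention_cost_sqrt (k c : ℕ) (hk : 0 < k) (hc : 0 < c) :
    ∃ C : ℝ, 0 < C ∧ ∀ L : ℕ, 1 ≤ L →
      ∀ B : ℕ, B = ⌈Real.sqrt L⌉₊ →
        ((∑ i ∈ Finset.Icc 1 L,
            ((Finset.Icc 1 i).filter
                (fun j => i - k * B < j ∨ B - c ≤ (j - 1) % B)).card : ℕ) : ℝ) ≤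
          C * (L : ℝ) * Real.sqrt L := by
  refine ⟨2 * k + 2 * c, by positivity, ?_⟩
  intro L hL B hB
  have hL0 : (0 : ℝ) < L := by exact_mod_cast hL
  have hs : (0 : ℝ) < Real.sqrt L := Real.sqrt_pos.2 hL0
  have hB1 : 1 ≤ B := by
    rw [hB]; exact Nat.one_le_ceil_iff.2 hs
  have hB0 : 0 < B := hB1
  -- periodic part bound
  have hper : ((Icc 1 L).filter (fun j => B - c ≤ (j - 1) % B)).card
      ≤ c * ((L - 1) / B + 1) := by
    set s := (Icc 1 L).filter (fun j => B - c ≤ (j - 1) % B) with hsdef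
    have h1 : s.card ≤ c * (s.image (fun j => (j - 1) / B)).card := by
      apply Finset.card_le_mul_card_image
      intro a _
      have : (s.filter (fun x => (x - 1) / B = a)).card ≤ (Finset.Ico (B - c) B).card := by
        apply Finset.card_le_card_of_injOn (fun j => (j - 1) % B)
        · intro j hj
          simp only [hsdef, Finset.mem_coe, Finset.mem_filter, Finset.mem_Icc] at hj
          exact Finset.mem_Ico.2 ⟨hj.1.2, Nat.mod_lt _ hB0⟩
        · intro j1 hj1 j2 hj2 hmod
          simp only at hmod
          simp only [hsdef, Finset.mem_coe, Finset.mem_filter, Finset.mem_Icc] at hj1 hj2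
          obtain ⟨⟨⟨h1a, _⟩, _⟩, hq1⟩ := hj1
          obtain ⟨⟨⟨h2a, _⟩, _⟩, hq2⟩ := hj2
          have e1 := Nat.div_add_mod (j1 - 1) B
          have e2 := Nat.div_add_mod (j2 - 1) B
          rw [hq1] at e1
          rw [hq2] at e2
          omega
      calc (s.filter (fun x => (x - 1) / B = a)).card
          ≤ (Finset.Ico (B - c) B).card := this
        _ = B - (B - c) := Nat.card_Ico _ _
        _ ≤ c := by omega
    have h2 : (s.image (fun j => (j - 1) / B)).card ≤ (L - 1) / B + 1 := by
      have hsub : s.image (fun j => (j - 1) / B) ⊆ Finset.Icc 0 ((L - 1) / B) := by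
        intro a ha
        simp only [Finset.mem_image, hsdef, Finset.mem_filter, Finset.mem_Icc] at ha ⊢
        obtain ⟨j, ⟨⟨_, hjL⟩, _⟩, rfl⟩ := ha
        exact ⟨Nat.zero_le _, Nat.div_le_div_right (by omega)⟩
      calc (s.image (fun j => (j - 1) / B)).card ≤ (Finset.Icc 0 ((L - 1) / B)).card :=
            Finset.card_le_card hsub
        _ = (L - 1) / B + 1 := by rw [Nat.card_Icc, Nat.sub_zero]
    calc s.card ≤ c * (s.image (fun j => (j - 1) / B)).card := h1
      _ ≤ c * ((L - 1) / B + 1) := Nat.mul_le_mul_left _ h2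
  -- per-term bound
  have key : ∀ i ∈ Icc 1 L,
      ((Icc 1 i).filter (fun j => i - k * B < j ∨ B - c ≤ (j - 1) % B)).card
        ≤ k * B + c * ((L - 1) / B + 1) := by
    intro i hi
    simp only [Finset.mem_Icc] at hi
    have hsplit : (Icc 1 i).filter (fun j => i - k * B < j ∨ B - c ≤ (j - 1) % B)
        ⊆ (Icc 1 i).filter (fun j => i - k * B < j) ∪
          (Icc 1 L).filter (fun j => B - c ≤ (j - 1) % B) := by
      intro j hj
      simp only [Finset.mem_filter, Finset.mem_Icc, Finset.mem_union] at hj ⊢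
      rcases hj.2 with h | h
      · exact Or.inl ⟨hj.1, h⟩
      · exact Or.inr ⟨⟨hj.1.1, le_trans hj.1.2 hi.2⟩, h⟩
    have hnear : ((Icc 1 i).filter (fun j => i - k * B < j)).card ≤ k * B := by
      have hsub : (Icc 1 i).filter (fun j => i - k * B < j) ⊆ Icc (i - k * B + 1) i := by
        intro j hj
        simp only [Finset.mem_filter, Finset.mem_Icc] at hj ⊢
        omega
      calc ((Icc 1 i).filter (fun j => i - k * B < j)).card
          ≤ (Icc (i - k * B + 1) i).card := Finset.card_le_card hsub
        _ = i + 1 - (i - k * B + 1) := Nat.card_Icc _ _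
        _ ≤ k * B := by omega
    calc ((Icc 1 i).filter (fun j => i - k * B < j ∨ B - c ≤ (j - 1) % B)).card
        ≤ (((Icc 1 i).filter (fun j => i - k * B < j)) ∪
            ((Icc 1 L).filter (fun j => B - c ≤ (j - 1) % B))).card :=
          Finset.card_le_card hsplit
      _ ≤ ((Icc 1 i).filter (fun j => i - k * B < j)).card +
            ((Icc 1 L).filter (fun j => B - c ≤ (j - 1) % B)).card :=
          Finset.card_union_le _ _
      _ ≤ k * B + c * ((L - 1) / B + 1) := Nat.add_le_add hnear hper
  -- sum bound in ℕ
  have hsum : (∑ i ∈ Finset.Icc 1 L,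
      ((Finset.Icc 1 i).filter
        (fun j => i - k * B < j ∨ B - c ≤ (j - 1) % B)).card)
      ≤ L * (k * B + c * ((L - 1) / B + 1)) := by
    calc _ ≤ (Icc 1 L).card • (k * B + c * ((L - 1) / B + 1)) :=
          Finset.sum_le_card_nsmul _ _ _ key
      _ = L * (k * B + c * ((L - 1) / B + 1)) := by
          rw [Nat.card_Icc, smul_eq_mul, Nat.add_sub_cancel]
  -- real estimates
  have hBle : (B : ℝ) ≤ 2 * Real.sqrt L := by
    have h1 : (B : ℝ) < Real.sqrt L + 1 := by
      rw [hB]; exact Nat.ceil_lt_add_one (Real.sqrt_nonneg _)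
    have h2 : 1 ≤ Real.sqrt L := by
      rw [show (1:ℝ) = Real.sqrt 1 by simp]
      exact Real.sqrt_le_sqrt (by exact_mod_cast hL)
    linarith
  have hdivle : (((L - 1) / B + 1 : ℕ) : ℝ) ≤ 2 * Real.sqrt L := by
    have hsB : Real.sqrt L ≤ (B : ℝ) := by rw [hB]; exact Nat.le_ceil _
    have h2 : 1 ≤ Real.sqrt L := by
      rw [show (1:ℝ) = Real.sqrt 1 by simp]
      exact Real.sqrt_le_sqrt (by exact_mod_cast hL)
    have h3 : (((L - 1) / B : ℕ) : ℝ) ≤ (L : ℝ) / B := by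
      calc (((L - 1) / B : ℕ) : ℝ) ≤ ((L - 1 : ℕ) : ℝ) / (B : ℝ) := Nat.cast_div_le
        _ ≤ (L : ℝ) / B := by
            have hBr : (0:ℝ) < B := by exact_mod_cast hB0
            gcongr
            exact_mod_cast Nat.sub_le L 1
    have h4 : (L : ℝ) / B ≤ (L : ℝ) / Real.sqrt L :=
      div_le_div_of_nonneg_left (le_of_lt hL0) hs hsB
    have h5 : (L : ℝ) / Real.sqrt L = Real.sqrt L := Real.div_sqrt
    push_cast
    linarith
  have hterm : ((k * B + c * ((L - 1) / B + 1) : ℕ) : ℝ)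
      ≤ (2 * k + 2 * c) * Real.sqrt L := by
    push_cast
    have hk' : (0:ℝ) ≤ k := by positivity
    have hc' : (0:ℝ) ≤ c := by positivity
    have := mul_le_mul_of_nonneg_left hBle hk'
    have h2 := mul_le_mul_of_nonneg_left hdivle hc'
    push_cast at h2
    nlinarith
  calc ((∑ i ∈ Finset.Icc 1 L,
        ((Finset.Icc 1 i).filter
          (fun j => i - k * B < j ∨ B - c ≤ (j - 1) % B)).card : ℕ) : ℝ)
      ≤ ((L * (k * B + c * ((L - 1) / B + 1)) : ℕ) : ℝ) := by exact_mod_cast hsum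
    _ = (L : ℝ) * ((k * B + c * ((L - 1) / B + 1) : ℕ) : ℝ) := by push_cast; ring
    _ ≤ (L : ℝ) * ((2 * k + 2 * c) * Real.sqrt L) :=
        mul_le_mul_of_nonneg_left hterm (le_of_lt hL0)
    _ = (2 * k + 2 * c) * (L : ℝ) * Real.sqrt L := by ring
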